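/- The improper integral ∫₀^∞ (√(3x²+1) − √3·x)/(√2(x²+1)) dx converges, and exp of this integral equals (2√3)^{√(3/2)}·(√3 − √2). -/

import Mathlib

open Real Filter MeasureTheory

noncomputable def Fc (x : ℝ) : ℝ :=
  Real.sqrt (3/2) * Real.log ((Real.sqrt 3 * x + Real.sqrt (3*x^2+1)) / Real.sqrt (x^2+1))
  + Real.log ((Real.sqrt (3*x^2+1) - Real.sqrt 2 * x) / Real.sqrt (x^2+1))

lemma key_pos (x : ℝ) (hx : 0 ≤ x) :
    Real.sqrt 2 * x < Real.sqrt (3*x^2+1) := by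
  nlinarith [Real.sq_sqrt (by positivity : (0:ℝ) ≤ 3*x^2+1),
    Real.sq_sqrt (by norm_num : (0:ℝ) ≤ 2),
    Real.sqrt_nonneg (3*x^2+1), Real.sqrt_nonneg 2, mul_nonneg (Real.sqrt_nonneg 2) hx]

lemma Fc_deriv (x : ℝ) (hx : 0 ≤ x) :
    HasDerivAt Fc ((Real.sqrt (3 * x ^ 2 + 1) - Real.sqrt 3 * x) / (Real.sqrt 2 * (x ^ 2 + 1))) x := by
  have h31 : (0:ℝ) < 3*x^2+1 := by positivity
  have h11 : (0:ℝ) < x^2+1 := by positivity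
  set s := Real.sqrt (3*x^2+1) with hs
  set t := Real.sqrt (x^2+1) with ht
  have hs0 : 0 < s := Real.sqrt_pos.mpr h31
  have ht0 : 0 < t := Real.sqrt_pos.mpr h11
  have hs2 : s^2 = 3*x^2+1 := Real.sq_sqrt h31.le
  have ht2 : t^2 = x^2+1 := Real.sq_sqrt h11.le
  have hsq3 : Real.sqrt 3 ^ 2 = 3 := Real.sq_sqrt (by norm_num)
  have hsq2 : Real.sqrt 2 ^ 2 = 2 := Real.sq_sqrt (by norm_num)
  have hsq20 : (0:ℝ) < Real.sqrt 2 := Real.sqrt_pos.mpr (by norm_num)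
  have hsq30 : (0:ℝ) < Real.sqrt 3 := Real.sqrt_pos.mpr (by norm_num)
  have hnum1 : 0 < Real.sqrt 3 * x + s := by positivity
  have hnum2 : 0 < s - Real.sqrt 2 * x := by
    have := key_pos x hx; linarith
  have hds : HasDerivAt (fun y : ℝ => Real.sqrt (3*y^2+1)) ((6*x)/(2*s)) x := by
    have h1 : HasDerivAt (fun y : ℝ => 3*y^2+1) (6*x) x := by
      have := ((hasDerivAt_pow 2 x).const_mul 3).add_const 1
      exact this.congr_deriv (by simp only [show (2:ℕ) - 1 = 1 from rfl, Nat.cast_ofNat]; ring)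
    simpa using h1.sqrt (by positivity)
  have hdt : HasDerivAt (fun y : ℝ => Real.sqrt (y^2+1)) ((2*x)/(2*t)) x := by
    have h1 : HasDerivAt (fun y : ℝ => y^2+1) (2*x) x := by
      have := (hasDerivAt_pow 2 x).add_const 1
      exact this.congr_deriv (by simp only [show (2:ℕ) - 1 = 1 from rfl, Nat.cast_ofNat]; ring)
    simpa using h1.sqrt (by positivity)
  have hd1 : HasDerivAt (fun y : ℝ => Real.sqrt 3 * y + Real.sqrt (3*y^2+1))
      (Real.sqrt 3 + (6*x)/(2*s)) x := by
    have h0 : HasDerivAt (fun y : ℝ => Real.sqrt 3 * y) (Real.sqrt 3) x := by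
      simpa using (hasDerivAt_id x).const_mul (Real.sqrt 3)
    exact h0.add hds
  have hd2 : HasDerivAt (fun y : ℝ => Real.sqrt (3*y^2+1) - Real.sqrt 2 * y)
      ((6*x)/(2*s) - Real.sqrt 2) x := by
    have h0 : HasDerivAt (fun y : ℝ => Real.sqrt 2 * y) (Real.sqrt 2) x := by
      simpa using (hasDerivAt_id x).const_mul (Real.sqrt 2)
    exact hds.sub h0
  have hq1 : HasDerivAt (fun y : ℝ => (Real.sqrt 3 * y + Real.sqrt (3*y^2+1)) / Real.sqrt (y^2+1))
      (((Real.sqrt 3 + (6*x)/(2*s)) * t - (Real.sqrt 3 * x + s) * ((2*x)/(2*t))) / t^2) x :=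
    hd1.div hdt ht0.ne'
  have hq2 : HasDerivAt (fun y : ℝ => (Real.sqrt (3*y^2+1) - Real.sqrt 2 * y) / Real.sqrt (y^2+1))
      ((((6*x)/(2*s) - Real.sqrt 2) * t - (s - Real.sqrt 2 * x) * ((2*x)/(2*t))) / t^2) x :=
    hd2.div hdt ht0.ne'
  have hl1 := (hq1.log (by positivity)).const_mul (Real.sqrt (3/2))
  have hl2 := hq2.log (by positivity)
  have hD := hl1.add hl2
  have hc : Real.sqrt (3/2) = Real.sqrt 3 / Real.sqrt 2 := Real.sqrt_div (by norm_num) 2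
  have hFc : HasDerivAt Fc (Real.sqrt (3/2) *
      ((((Real.sqrt 3 + (6*x)/(2*s)) * t - (Real.sqrt 3 * x + s) * ((2*x)/(2*t))) / t^2) /
        ((Real.sqrt 3 * x + s) / t)) +
      ((((6*x)/(2*s) - Real.sqrt 2) * t - (s - Real.sqrt 2 * x) * ((2*x)/(2*t))) / t^2) /
        ((s - Real.sqrt 2 * x) / t)) x := hD
  clear_value s t
  convert hFc using 1
  rw [hc]
  have hn2 : s - x * Real.sqrt 2 ≠ 0 := by linarith
  field_simp [hs0.ne', ht0.ne', hnum1.ne', hnum2.ne', hsq20.ne', hsq30.ne', hn2]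
  linear_combination ((2)*s^2*t^2 + (-2)*s*t^2*(Real.sqrt 2)*x + (-4)*t^2*(Real.sqrt 3)^2*x^2 + (2)*(Real.sqrt 3)^2*x^4 + (2)*s*(Real.sqrt 3)*x^3 + (2)*t^2*(Real.sqrt 2)^2*x^2 + (2)*s*(Real.sqrt 2)*x^3 + (-2)*(Real.sqrt 2)^2*x^4 + (-2)*t^2*(Real.sqrt 3)^2 + (2)*(Real.sqrt 3)^2*x^2 + (2)*s*(Real.sqrt 3)*x + (2)*t^2*(Real.sqrt 2)^2 + (2)*s*(Real.sqrt 2)*x + (-2)*(Real.sqrt 2)^2*x^2 + (6)*t^2*x^2 + (2)*t^2) * hs2 + ((4)*s*(Real.sqrt 3)^2*(Real.sqrt 2)*x^3 + (-6)*s*(Real.sqrt 3)*x^3 + (2)*s*(Real.sqrt 3)*(Real.sqrt 2)^2*x^3 + (-12)*s*(Real.sqrt 2)*x^3 + (2)*s*(Real.sqrt 3)^2*(Real.sqrt 2)*x + (-6)*s*(Real.sqrt 3)*x + (2)*s*(Real.sqrt 3)*(Real.sqrt 2)^2*x + (-8)*s*(Real.sqrt 2)*x + (-12)*(Real.sqrt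 3)^2*x^4 + (-10)*(Real.sqrt 3)^2*x^2 + (6)*(Real.sqrt 2)^2*x^4 + (8)*(Real.sqrt 2)^2*x^2 + (-2)*(Real.sqrt 3)^2 + (2)*(Real.sqrt 2)^2 + (18)*x^4 + (12)*x^2 + (2)) * ht2 + ((2)*s*(Real.sqrt 2)*x^5 + (4)*s*(Real.sqrt 2)*x^3 + (-6)*x^6 + (-14)*x^4 + (2)*s*(Real.sqrt 2)*x + (-10)*x^2 + (-2)) * hsq3 + ((6)*x^4 + (2)*s*(Real.sqrt 3)*x^3 + (2)*s*(Real.sqrt 3)*x + (8)*x^2 + (2)) * hsq2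

noncomputable def Gc (r : ℝ) : ℝ :=
  Real.sqrt (3/2) * Real.log ((Real.sqrt 3 + Real.sqrt (3+r)) / Real.sqrt (1+r))
  + Real.log ((Real.sqrt (3+r) - Real.sqrt 2) / Real.sqrt (1+r))

lemma sqrt23 : Real.sqrt 2 < Real.sqrt 3 := by
  exact Real.sqrt_lt_sqrt (by norm_num) (by norm_num)

lemma Gc_cont : ContinuousAt Gc 0 := by
  have h3 : ContinuousAt (fun r : ℝ => Real.sqrt (3+r)) 0 :=
    (Real.continuous_sqrt.comp (continuous_const.add continuous_id)).continuousAt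
  have h1 : ContinuousAt (fun r : ℝ => Real.sqrt (1+r)) 0 :=
    (Real.continuous_sqrt.comp (continuous_const.add continuous_id)).continuousAt
  have e3 : Real.sqrt (3+(0:ℝ)) = Real.sqrt 3 := by norm_num
  have e1 : Real.sqrt (1+(0:ℝ)) = 1 := by norm_num [Real.sqrt_one]
  have hq1 : ContinuousAt (fun r : ℝ => (Real.sqrt 3 + Real.sqrt (3+r)) / Real.sqrt (1+r)) 0 :=
    (continuousAt_const.add h3).div h1 (by rw [e1]; norm_num)
  have hq2 : ContinuousAt (fun r : ℝ => (Real.sqrt (3+r) - Real.sqrt 2) / Real.sqrt (1+r)) 0 :=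
    (h3.sub continuousAt_const).div h1 (by rw [e1]; norm_num)
  have hpos1 : (Real.sqrt 3 + Real.sqrt (3+(0:ℝ))) / Real.sqrt (1+(0:ℝ)) ≠ 0 := by
    rw [e3, e1]
    positivity
  have hpos2 : (Real.sqrt (3+(0:ℝ)) - Real.sqrt 2) / Real.sqrt (1+(0:ℝ)) ≠ 0 := by
    rw [e3, e1]
    have := sqrt23
    simp only [div_one]
    linarith
  exact ((hq1.log hpos1).const_mul _).add (hq2.log hpos2)

lemma Gc_zero : Gc 0 = Real.sqrt (3/2) * Real.log (2 * Real.sqrt 3)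
    + Real.log (Real.sqrt 3 - Real.sqrt 2) := by
  have e3 : (3:ℝ)+0 = 3 := by norm_num
  have e1 : Real.sqrt (1+(0:ℝ)) = 1 := by norm_num [Real.sqrt_one]
  unfold Gc
  rw [e3, e1, div_one, div_one, two_mul]

lemma Fc_tendsto : Filter.Tendsto Fc atTop (nhds (Real.sqrt (3/2) * Real.log (2 * Real.sqrt 3)
    + Real.log (Real.sqrt 3 - Real.sqrt 2))) := by
  have hr : Filter.Tendsto (fun x : ℝ => (x^2)⁻¹) atTop (nhds 0) :=
    tendsto_inv_atTop_zero.comp (tendsto_pow_atTop (by norm_num))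
  have h0 : Filter.Tendsto (fun x : ℝ => Gc ((x^2)⁻¹)) atTop (nhds (Gc 0)) :=
    Gc_cont.tendsto.comp hr
  rw [← Gc_zero]
  apply h0.congr'
  filter_upwards [Filter.eventually_gt_atTop 0] with x hx
  have hx2 : (0:ℝ) < x^2 := by positivity
  have hs3 : Real.sqrt (3+(x^2)⁻¹) = Real.sqrt (3*x^2+1) / x := by
    rw [show (3:ℝ)+(x^2)⁻¹ = (3*x^2+1)/x^2 by field_simp,
      Real.sqrt_div (by positivity) _, Real.sqrt_sq hx.le]
  have hs1 : Real.sqrt (1+(x^2)⁻¹) = Real.sqrt (x^2+1) / x := by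
    rw [show (1:ℝ)+(x^2)⁻¹ = (x^2+1)/x^2 by field_simp,
      Real.sqrt_div (by positivity) _, Real.sqrt_sq hx.le]
  have ht0 : (0:ℝ) < Real.sqrt (x^2+1) := Real.sqrt_pos.mpr (by positivity)
  have eA : (Real.sqrt 3 + Real.sqrt (3*x^2+1)/x) / (Real.sqrt (x^2+1)/x)
      = (Real.sqrt 3 * x + Real.sqrt (3*x^2+1)) / Real.sqrt (x^2+1) := by
    rw [div_eq_div_iff (by positivity) ht0.ne']
    field_simp
  have eB : (Real.sqrt (3*x^2+1)/x - Real.sqrt 2) / (Real.sqrt (x^2+1)/x)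
      = (Real.sqrt (3*x^2+1) - Real.sqrt 2 * x) / Real.sqrt (x^2+1) := by
    rw [div_eq_div_iff (by positivity) ht0.ne']
    field_simp
  unfold Gc Fc
  rw [hs3, hs1, eA, eB]


theorem constant_A_value :
    IntegrableOn
      (fun x : ℝ => (Real.sqrt (3 * x ^ 2 + 1) - Real.sqrt 3 * x) / (Real.sqrt 2 * (x ^ 2 + 1)))
      (Set.Ici 0) volume ∧
    Real.exp (∫ x in Set.Ici (0:ℝ),
        (Real.sqrt (3 * x ^ 2 + 1) - Real.sqrt 3 * x) / (Real.sqrt 2 * (x ^ 2 + 1)))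
      = Real.rpow (2 * Real.sqrt 3) (Real.sqrt (3 / 2)) * (Real.sqrt 3 - Real.sqrt 2) := by
  set f : ℝ → ℝ := fun x => (Real.sqrt (3 * x ^ 2 + 1) - Real.sqrt 3 * x) / (Real.sqrt 2 * (x ^ 2 + 1)) with hf
  have hderiv : ∀ x ∈ Set.Ici (0:ℝ), HasDerivAt Fc (f x) x := fun x hx => Fc_deriv x hx
  have hpos : ∀ x ∈ Set.Ioi (0:ℝ), 0 ≤ f x := by
    intro x hx
    have hnum : Real.sqrt 3 * x ≤ Real.sqrt (3 * x ^ 2 + 1) := by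
      nlinarith [Real.sq_sqrt (by positivity : (0:ℝ) ≤ 3 * x ^ 2 + 1),
        Real.sq_sqrt (by norm_num : (0:ℝ) ≤ 3), Real.sqrt_nonneg (3 * x ^ 2 + 1),
        Real.sqrt_nonneg 3, mul_nonneg (Real.sqrt_nonneg 3) (le_of_lt hx)]
    apply div_nonneg (by linarith)
    positivity
  have hint : IntegrableOn f (Set.Ioi (0:ℝ)) volume :=
    integrableOn_Ioi_deriv_of_nonneg' hderiv hpos Fc_tendsto
  have hval : ∫ x in Set.Ioi (0:ℝ), f x
      = (Real.sqrt (3/2) * Real.log (2 * Real.sqrt 3) + Real.log (Real.sqrt 3 - Real.sqrt 2)) - Fc 0 :=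
    integral_Ioi_of_hasDerivAt_of_nonneg' hderiv hpos Fc_tendsto
  have hFc0 : Fc 0 = 0 := by
    unfold Fc
    norm_num
  constructor
  · rw [integrableOn_Ici_iff_integrableOn_Ioi]
    exact hint
  · rw [MeasureTheory.integral_Ici_eq_integral_Ioi, hval, hFc0, sub_zero, Real.exp_add,
      Real.exp_log (by have := sqrt23; linarith)]
    congr 1
    have hrw : Real.rpow (2*Real.sqrt 3) (Real.sqrt (3/2))
        = Real.exp (Real.log (2*Real.sqrt 3) * Real.sqrt (3/2)) :=
      Real.rpow_def_of_pos (by positivity) _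
    rw [hrw, mul_comm]
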